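/- arXiv:2512.01026 — 4 statements merged into one kernel-verified Lean document; each statement's English description precedes it below -/
import Mathlib

section
/- Let X be a geometric random variable with P(X = k) = (1-p)p^k and let a = (1+p)/(1-p) (so p = (a-1)/(a+1), a > 1). Then the fourth central moment satisfies E[(X - E X)^4] ≤ (5/8)(a+1)^4. -/
lemma descFac_hasSum (p : ℝ) (hp0 : 0 < p) (hp1 : p < 1) (j : ℕ) :
    HasSum (fun n : ℕ => ((n + j).descFactorial j : ℝ) * p ^ n)
      ((j.factorial : ℝ) / (1 - p) ^ (j + 1)) := by
  have hn : ‖p‖ < 1 := by rw [Real.norm_eq_abs, abs_of_pos hp0]; exact hp1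
  have h := (hasSum_choose_mul_geometric_of_norm_lt_one j hn).mul_left (j.factorial : ℝ)
  convert h using 1
  · rfl
  · funext n
    rw [← mul_assoc]
    norm_cast
    rw [Nat.descFactorial_eq_factorial_mul_choose]
  · rw [mul_one_div]

/-- For the geometric distribution `P(X = k) = (1-p) p^k` with `p ∈ (0,1)` and
`a = (1+p)/(1-p)` (so `a > 1`), the fourth central moment (the mean being `p/(1-p)`)
is at most `(5/8) (a+1)^4`. -/
theorem geometric_fourth_central_moment (p a : ℝ) (hp0 : 0 < p) (hp1 : p < 1)
    (ha : a = (1 + p) / (1 - p)) :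
    ∃ S : ℝ,
      HasSum (fun k : ℕ => ((k : ℝ) - p / (1 - p)) ^ 4 * ((1 - p) * p ^ k)) S ∧
      S ≤ (5 / 8) * (a + 1) ^ 4 := by
  have hq : (0 : ℝ) < 1 - p := by linarith
  have hq' : (1 : ℝ) - p ≠ 0 := ne_of_gt hq
  set c0 : ℝ := p ^ 4 / (1 - p) ^ 3 + 4 * p ^ 3 / (1 - p) ^ 2 + 6 * p ^ 2 / (1 - p) + 3 * p + 1
    with hc0
  set c1 : ℝ := -(4 * p ^ 3 / (1 - p) ^ 2) - 18 * p ^ 2 / (1 - p) - 13 * p - 15 with hc1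
  set c2 : ℝ := 6 * p ^ 2 / (1 - p) - p + 25 with hc2
  set c3 : ℝ := 6 * p - 10 with hc3
  set c4 : ℝ := 1 - p with hc4
  have H0 := (descFac_hasSum p hp0 hp1 0).mul_left c0
  have H1 := (descFac_hasSum p hp0 hp1 1).mul_left c1
  have H2 := (descFac_hasSum p hp0 hp1 2).mul_left c2
  have H3 := (descFac_hasSum p hp0 hp1 3).mul_left c3
  have H4 := (descFac_hasSum p hp0 hp1 4).mul_left c4
  have H := (((H0.add H1).add H2).add H3).add H4
  have Hmain : HasSum (fun k : ℕ => ((k : ℝ) - p / (1 - p)) ^ 4 * ((1 - p) * p ^ k))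
      (c0 * ((Nat.factorial 0 : ℝ) / (1 - p) ^ (0 + 1))
        + c1 * ((Nat.factorial 1 : ℝ) / (1 - p) ^ (1 + 1))
        + c2 * ((Nat.factorial 2 : ℝ) / (1 - p) ^ (2 + 1))
        + c3 * ((Nat.factorial 3 : ℝ) / (1 - p) ^ (3 + 1))
        + c4 * ((Nat.factorial 4 : ℝ) / (1 - p) ^ (4 + 1))) := by
    convert H using 1
    rfl
    funext n
    have d0 : ((n + 0).descFactorial 0 : ℝ) = 1 := by norm_num
    have d1 : ((n + 1).descFactorial 1 : ℝ) = (n : ℝ) + 1 := by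
      simp [Nat.descFactorial]
    have d2 : ((n + 2).descFactorial 2 : ℝ) = ((n : ℝ) + 1) * ((n : ℝ) + 2) := by
      simp [Nat.descFactorial]
    have d3 : ((n + 3).descFactorial 3 : ℝ) =
        ((n : ℝ) + 1) * ((n : ℝ) + 2) * ((n : ℝ) + 3) := by
      simp [Nat.descFactorial]
      ring
    have d4 : ((n + 4).descFactorial 4 : ℝ) =
        ((n : ℝ) + 1) * ((n : ℝ) + 2) * ((n : ℝ) + 3) * ((n : ℝ) + 4) := by
      simp [Nat.descFactorial]
      ring
    rw [d0, d1, d2, d3, d4, hc0, hc1, hc2, hc3, hc4]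
    field_simp [sub_ne_zero.mpr hp1.ne']
    ring
  refine ⟨_, Hmain, ?_⟩
  have hval : c0 * ((Nat.factorial 0 : ℝ) / (1 - p) ^ (0 + 1))
        + c1 * ((Nat.factorial 1 : ℝ) / (1 - p) ^ (1 + 1))
        + c2 * ((Nat.factorial 2 : ℝ) / (1 - p) ^ (2 + 1))
        + c3 * ((Nat.factorial 3 : ℝ) / (1 - p) ^ (3 + 1))
        + c4 * ((Nat.factorial 4 : ℝ) / (1 - p) ^ (4 + 1))
      = p * (1 + 7 * p + p ^ 2) / (1 - p) ^ 4 := by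
    rw [hc0, hc1, hc2, hc3, hc4]
    norm_num [Nat.factorial]
    field_simp [sub_ne_zero.mpr hp1.ne']
    ring
  rw [hval, ha]
  have hnum : p * (1 + 7 * p + p ^ 2) ≤ 10 := by nlinarith
  have hrhs : (5 / 8 : ℝ) * ((1 + p) / (1 - p) + 1) ^ 4 = 10 / (1 - p) ^ 4 := by
    rw [show (1 + p) / (1 - p) + 1 = 2 / (1 - p) by field_simp [sub_ne_zero.mpr hp1.ne']; norm_num]
    rw [div_pow]
    ring
  rw [hrhs]
  gcongr
end

section
/- Let a₁, a₂ > 1 and p_j = (a_j - 1)/(a_j + 1), j = 1,2. Then for any r > 0 the squared Hellinger distance between negative binomial distributions satisfies H²(NB(r,p₁), NB(r,p₂)) ≤ r(a₁ - a₂)² / ((a₁-1)(a₂-1)). -/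
open MeasureTheory Real Set

lemma lintegral_rpow_exp {a b : ℝ} (ha : 0 < a) (hb : 0 < b) :
    ∫⁻ t in Ioi (0:ℝ), ENNReal.ofReal (t ^ (a - 1) * Real.exp (-(b * t))) =
      ENNReal.ofReal ((1 / b) ^ a * Real.Gamma a) := by
  have hint : IntegrableOn (fun t : ℝ => t ^ (a - 1) * Real.exp (-(b * t))) (Ioi 0) := by
    have h := integrableOn_rpow_mul_exp_neg_mul_rpow
      (by linarith : (-1:ℝ) < a - 1) (by norm_num : (0:ℝ) < 1) hb
    simpa [Real.rpow_one, neg_mul] using h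
  rw [← Real.integral_rpow_mul_exp_neg_mul_Ioi ha hb,
    ofReal_integral_eq_lintegral_ofReal hint ?_]
  filter_upwards [ae_restrict_mem measurableSet_Ioi] with t ht
  have : (0:ℝ) < t := ht
  positivity

lemma hasSum_gammaSeries {r x : ℝ} (hr : 0 < r) (hx0 : 0 ≤ x) (hx1 : x < 1) :
    HasSum (fun k : ℕ => Real.Gamma (k + r) / (k.factorial * Real.Gamma r) * x ^ k)
      ((1 - x) ^ (-r : ℝ)) := by
  have hΓ : 0 < Real.Gamma r := Real.Gamma_pos_of_pos hr
  have h1x : (0:ℝ) < 1 - x := by linarith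
  set c : ℕ → ℝ := fun k => Real.Gamma (k + r) / (k.factorial * Real.Gamma r) * x ^ k with hc_def
  have hc : ∀ k, 0 ≤ c k := by
    intro k
    have hΓk : 0 < Real.Gamma (k + r) := Real.Gamma_pos_of_pos (by positivity)
    have h2 : (0:ℝ) < k.factorial := by positivity
    simp only [hc_def]
    positivity
  set F : ℕ → ℝ → ℝ := fun k t =>
    x ^ k / (k.factorial * Real.Gamma r) * (t ^ ((k : ℝ) + r - 1) * Real.exp (-(1 * t)))
    with hF_def
  have hA : ∀ k : ℕ, ENNReal.ofReal (c k) =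
      ∫⁻ t in Ioi (0:ℝ), ENNReal.ofReal (F k t) := by
    intro k
    have h2 : (0:ℝ) < k.factorial := by positivity
    have hq : (0:ℝ) ≤ x ^ k / (k.factorial * Real.Gamma r) := by positivity
    simp only [hF_def, ENNReal.ofReal_mul hq]
    rw [lintegral_const_mul' _ _ ENNReal.ofReal_ne_top,
      lintegral_rpow_exp (by positivity : (0:ℝ) < (k:ℝ) + r) one_pos,
      ← ENNReal.ofReal_mul hq]
    congr 1
    simp only [hc_def]
    rw [one_div_one, Real.one_rpow]
    ring
  have hmeas : ∀ k : ℕ, AEMeasurable (fun t : ℝ => ENNReal.ofReal (F k t))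
      (volume.restrict (Ioi (0:ℝ))) := by
    intro k
    apply Measurable.aemeasurable
    simp only [hF_def]
    fun_prop
  have hpt : ∀ t ∈ Ioi (0:ℝ),
      (∑' k : ℕ, ENNReal.ofReal (F k t)) =
        ENNReal.ofReal (1 / Real.Gamma r * (t ^ (r - 1) * Real.exp (-((1 - x) * t)))) := by
    intro t ht
    have ht' : (0:ℝ) < t := ht
    have hsum : HasSum (fun k : ℕ => F k t)
        (1 / Real.Gamma r * (t ^ (r - 1) * Real.exp (-((1 - x) * t)))) := by
      have h0 := NormedSpace.expSeries_div_hasSum_exp (𝔸 := ℝ) (x * t)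
      have h1 := h0.mul_left (1 / Real.Gamma r * (t ^ (r - 1) * Real.exp (-t)))
      convert h1 using 1
      · rfl
      · funext k
        simp only [hF_def]
        rw [show ((k:ℝ) + r - 1) = (r - 1) + (k:ℝ) by ring, Real.rpow_add ht',
          Real.rpow_natCast]
        field_simp
        ring
      · rw [← Real.exp_eq_exp_ℝ, show (-((1 - x) * t)) = x * t + -t by ring, Real.exp_add]
        ring
    rw [← hsum.tsum_eq, ENNReal.ofReal_tsum_of_nonneg ?_ hsum.summable]
    intro k
    simp only [hF_def]
    have h3 := (Real.rpow_pos_of_pos ht' ((k:ℝ) + r - 1)).le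
    have h2 : (0:ℝ) < k.factorial := by positivity
    positivity
  have key : (∑' k : ℕ, ENNReal.ofReal (c k)) = ENNReal.ofReal ((1 - x) ^ (-r : ℝ)) := by
    calc (∑' k : ℕ, ENNReal.ofReal (c k))
        = ∑' k : ℕ, ∫⁻ t in Ioi (0:ℝ), ENNReal.ofReal (F k t) := tsum_congr hA
      _ = ∫⁻ t in Ioi (0:ℝ), ∑' k : ℕ, ENNReal.ofReal (F k t) := (lintegral_tsum hmeas).symm
      _ = ∫⁻ t in Ioi (0:ℝ),
            ENNReal.ofReal (1 / Real.Gamma r * (t ^ (r - 1) * Real.exp (-((1 - x) * t)))) :=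
          setLIntegral_congr_fun measurableSet_Ioi hpt
      _ = ENNReal.ofReal (1 / Real.Gamma r) *
            ENNReal.ofReal ((1 / (1 - x)) ^ r * Real.Gamma r) := by
          simp_rw [ENNReal.ofReal_mul (by positivity : (0:ℝ) ≤ 1 / Real.Gamma r)]
          rw [lintegral_const_mul' _ _ ENNReal.ofReal_ne_top, lintegral_rpow_exp hr h1x]
      _ = ENNReal.ofReal ((1 - x) ^ (-r : ℝ)) := by
          rw [← ENNReal.ofReal_mul (by positivity)]
          congr 1
          rw [one_div (1 - x), Real.inv_rpow h1x.le, ← Real.rpow_neg h1x.le]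
          field_simp
  have hfin : (∑' k : ℕ, ENNReal.ofReal (c k)) ≠ ⊤ := by
    rw [key]; exact ENNReal.ofReal_ne_top
  have hsummable : Summable c := by
    have h := ENNReal.summable_toReal hfin
    refine (summable_congr ?_).mp h
    intro k
    exact ENNReal.toReal_ofReal (hc k)
  have htsum : (∑' k, c k) = (1 - x) ^ (-r : ℝ) := by
    have h2 := ENNReal.tsum_toReal_eq (f := fun k : ℕ => ENNReal.ofReal (c k))
      (fun k => ENNReal.ofReal_ne_top)
    rw [key, ENNReal.toReal_ofReal (by positivity)] at h2
    calc (∑' k, c k) = ∑' k : ℕ, (ENNReal.ofReal (c k)).toReal :=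
          tsum_congr fun k => (ENNReal.toReal_ofReal (hc k)).symm
      _ = (1 - x) ^ (-r : ℝ) := h2.symm
  exact htsum ▸ hsummable.hasSum

/-- Mass function of the negative binomial distribution `NB(r,p)`:
`P(X = k) = Γ(k+r)/(k! Γ(r)) (1-p)^r p^k`. -/
noncomputable def nbMass (r p : ℝ) (k : ℕ) : ℝ :=
  Real.Gamma (k + r) / (k.factorial * Real.Gamma r) * (1 - p) ^ r * p ^ k

lemma nbMass_nonneg {r p : ℝ} (hr : 0 < r) (hp0 : 0 ≤ p) (hp1 : p < 1) (k : ℕ) :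
    0 ≤ nbMass r p k := by
  have hΓk : 0 < Real.Gamma (k + r) := Real.Gamma_pos_of_pos (by positivity)
  have hΓ : 0 < Real.Gamma r := Real.Gamma_pos_of_pos hr
  have h2 : (0:ℝ) < k.factorial := by positivity
  have h3 : (0:ℝ) < 1 - p := by linarith
  have h4 := (Real.rpow_pos_of_pos h3 r).le
  unfold nbMass
  positivity

lemma hasSum_nbMass {r p : ℝ} (hr : 0 < r) (hp0 : 0 ≤ p) (hp1 : p < 1) :
    HasSum (nbMass r p) 1 := by
  have h1p : (0:ℝ) < 1 - p := by linarith
  have h := (hasSum_gammaSeries hr hp0 hp1).mul_right ((1 - p) ^ r)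
  convert h using 1
  · rfl
  · funext k
    unfold nbMass
    ring
  · rw [← Real.rpow_add h1p, neg_add_cancel, Real.rpow_zero]

lemma sqrt_nbMass_mul {r p₁ p₂ : ℝ} (hr : 0 < r) (h10 : 0 ≤ p₁) (h11 : p₁ < 1)
    (h20 : 0 ≤ p₂) (h21 : p₂ < 1) (k : ℕ) :
    Real.sqrt (nbMass r p₁ k) * Real.sqrt (nbMass r p₂ k) =
      Real.Gamma (k + r) / (k.factorial * Real.Gamma r) * ((1 - p₁) * (1 - p₂)) ^ (r / 2)
        * Real.sqrt (p₁ * p₂) ^ k := by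
  have hΓk : 0 < Real.Gamma (k + r) := Real.Gamma_pos_of_pos (by positivity)
  have hΓ : 0 < Real.Gamma r := Real.Gamma_pos_of_pos hr
  have h2 : (0:ℝ) < k.factorial := by positivity
  have hC : (0:ℝ) ≤ Real.Gamma (k + r) / (k.factorial * Real.Gamma r) := by positivity
  have h1p : (0:ℝ) ≤ 1 - p₁ := by linarith
  have h2p : (0:ℝ) ≤ 1 - p₂ := by linarith
  have hD : (0:ℝ) ≤ (1 - p₁) * (1 - p₂) := mul_nonneg h1p h2p
  have hE : (0:ℝ) ≤ p₁ * p₂ := mul_nonneg h10 h20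
  rw [← Real.sqrt_mul (nbMass_nonneg hr h10 h11 k)]
  have hprod : nbMass r p₁ k * nbMass r p₂ k =
      (Real.Gamma (k + r) / (k.factorial * Real.Gamma r)) ^ 2 *
        (((1 - p₁) * (1 - p₂)) ^ r * (p₁ * p₂) ^ k) := by
    unfold nbMass
    rw [Real.mul_rpow h1p h2p, mul_pow]
    ring
  have hDr : Real.sqrt (((1 - p₁) * (1 - p₂)) ^ r) = ((1 - p₁) * (1 - p₂)) ^ (r / 2) := by
    rw [Real.sqrt_eq_rpow, ← Real.rpow_mul hD]
    congr 1
    ring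
  have hEk : Real.sqrt ((p₁ * p₂) ^ k) = Real.sqrt (p₁ * p₂) ^ k := by
    rw [show ((p₁ * p₂) ^ k) = (p₁ * p₂) ^ ((k:ℕ):ℝ) from (Real.rpow_natCast _ k).symm,
      Real.sqrt_eq_rpow ((p₁ * p₂) ^ ((k:ℕ):ℝ)), Real.sqrt_eq_rpow (p₁ * p₂),
      ← Real.rpow_natCast ((p₁ * p₂) ^ (1 / (2:ℝ))) k, ← Real.rpow_mul hE,
      ← Real.rpow_mul hE]
    congr 1
    ring
  rw [hprod, Real.sqrt_mul (sq_nonneg _), Real.sqrt_sq hC,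
    Real.sqrt_mul (Real.rpow_nonneg hD r), hDr, hEk]
  ring

lemma hasSum_sqrt_mul {r p₁ p₂ : ℝ} (hr : 0 < r) (h10 : 0 ≤ p₁) (h11 : p₁ < 1)
    (h20 : 0 ≤ p₂) (h21 : p₂ < 1) :
    HasSum (fun k : ℕ => Real.sqrt (nbMass r p₁ k) * Real.sqrt (nbMass r p₂ k))
      (((1 - p₁) * (1 - p₂)) ^ (r / 2) * (1 - Real.sqrt (p₁ * p₂)) ^ (-r : ℝ)) := by
  have hx0 : 0 ≤ Real.sqrt (p₁ * p₂) := Real.sqrt_nonneg _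
  have hx1 : Real.sqrt (p₁ * p₂) < 1 := by
    calc Real.sqrt (p₁ * p₂) < Real.sqrt 1 :=
          Real.sqrt_lt_sqrt (mul_nonneg h10 h20) (by nlinarith)
      _ = 1 := Real.sqrt_one
  have h := (hasSum_gammaSeries hr hx0 hx1).mul_left (((1 - p₁) * (1 - p₂)) ^ (r / 2))
  convert h using 1
  · rfl
  funext k
  rw [sqrt_nbMass_mul hr h10 h11 h20 h21 k]
  ring

lemma core_ineq (r a₁ a₂ : ℝ) (hr : 0 < r) (ha₁ : 1 < a₁) (ha₂ : 1 < a₂) :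
    2 - 2 * ((Real.sqrt ((a₁ + 1) * (a₂ + 1)) + Real.sqrt ((a₁ - 1) * (a₂ - 1)))
        / (a₁ + a₂)) ^ r
      ≤ r * (a₁ - a₂) ^ 2 / ((a₁ - 1) * (a₂ - 1)) := by
  obtain ⟨u₁, hu₁d⟩ : ∃ u, u = Real.sqrt (a₁ + 1) := ⟨_, rfl⟩
  obtain ⟨u₂, hu₂d⟩ : ∃ u, u = Real.sqrt (a₂ + 1) := ⟨_, rfl⟩
  obtain ⟨v₁, hv₁d⟩ : ∃ u, u = Real.sqrt (a₁ - 1) := ⟨_, rfl⟩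
  obtain ⟨v₂, hv₂d⟩ : ∃ u, u = Real.sqrt (a₂ - 1) := ⟨_, rfl⟩
  have hu₁ : u₁ ^ 2 = a₁ + 1 := by rw [hu₁d]; exact Real.sq_sqrt (by linarith)
  have hu₂ : u₂ ^ 2 = a₂ + 1 := by rw [hu₂d]; exact Real.sq_sqrt (by linarith)
  have hv₁ : v₁ ^ 2 = a₁ - 1 := by rw [hv₁d]; exact Real.sq_sqrt (by linarith)
  have hv₂ : v₂ ^ 2 = a₂ - 1 := by rw [hv₂d]; exact Real.sq_sqrt (by linarith)
  have hu₁0 : 0 ≤ u₁ := hu₁d ▸ Real.sqrt_nonneg _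
  have hu₂0 : 0 ≤ u₂ := hu₂d ▸ Real.sqrt_nonneg _
  have hv₁0 : 0 ≤ v₁ := hv₁d ▸ Real.sqrt_nonneg _
  have hv₂0 : 0 ≤ v₂ := hv₂d ▸ Real.sqrt_nonneg _
  have hAeq : Real.sqrt ((a₁ + 1) * (a₂ + 1)) = u₁ * u₂ := by
    rw [hu₁d, hu₂d]; exact Real.sqrt_mul (by linarith) _
  have hBeq : Real.sqrt ((a₁ - 1) * (a₂ - 1)) = v₁ * v₂ := by
    rw [hv₁d, hv₂d]; exact Real.sqrt_mul (by linarith) _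
  rw [hAeq, hBeq]
  clear hu₁d hu₂d hv₁d hv₂d hAeq hBeq
  have hu₁p : 0 < u₁ := by nlinarith
  have hu₂p : 0 < u₂ := by nlinarith
  have hv₁p : 0 < v₁ := by nlinarith
  have hv₂p : 0 < v₂ := by nlinarith
  have hApos : 0 < u₁ * u₂ := mul_pos hu₁p hu₂p
  have hBpos : 0 < v₁ * v₂ := mul_pos hv₁p hv₂p
  have hBle : v₁ * v₂ ≤ u₁ * u₂ := by nlinarith
  have hSpos : 0 < u₁ * u₂ + v₁ * v₂ := by linarith
  have hapos : 0 < a₁ + a₂ := by linarith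
  have hSle : u₁ * u₂ + v₁ * v₂ ≤ a₁ + a₂ := by
    nlinarith [sq_nonneg (u₁ - u₂), sq_nonneg (v₁ - v₂)]
  have hρpos : 0 < (u₁ * u₂ + v₁ * v₂) / (a₁ + a₂) := div_pos hSpos hapos
  -- logarithmic bound
  have hb1 : 1 - ((u₁ * u₂ + v₁ * v₂) / (a₁ + a₂)) ^ r
      ≤ r * (((u₁ * u₂ + v₁ * v₂) / (a₁ + a₂))⁻¹ - 1) := by
    have l1 := Real.log_le_sub_one_of_pos (Real.rpow_pos_of_pos hρpos r)
    have l2 := Real.log_le_sub_one_of_pos (inv_pos.mpr hρpos)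
    have l3 := Real.log_rpow hρpos r
    have l4 := Real.log_inv ((u₁ * u₂ + v₁ * v₂) / (a₁ + a₂))
    have l5 := mul_le_mul_of_nonneg_left l2 hr.le
    rw [l3] at l1
    rw [l4] at l2 l5
    linarith
  -- algebraic bound
  have hEdec : a₁ + a₂ - (u₁ * u₂ + v₁ * v₂) = ((u₁ - u₂) ^ 2 + (v₁ - v₂) ^ 2) / 2 := by
    linear_combination (-(1:ℝ)/2) * hu₁ - (1/2 : ℝ) * hu₂ - (1/2 : ℝ) * hv₁ - (1/2 : ℝ) * hv₂
  have hgap_u : (u₁ - u₂) ^ 2 * (4 * (v₁ * v₂)) ≤ (a₁ - a₂) ^ 2 := by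
    have h4A : 4 * (u₁ * u₂) ≤ (u₁ + u₂) ^ 2 := by nlinarith [sq_nonneg (u₁ - u₂)]
    have hid : (u₁ - u₂) ^ 2 * (u₁ + u₂) ^ 2 = (a₁ - a₂) ^ 2 := by
      have h : (u₁ - u₂) ^ 2 * (u₁ + u₂) ^ 2 = (u₁ ^ 2 - u₂ ^ 2) ^ 2 := by ring
      rw [h, hu₁, hu₂]; ring
    have s1 : (u₁ - u₂) ^ 2 * (4 * (v₁ * v₂)) ≤ (u₁ - u₂) ^ 2 * (4 * (u₁ * u₂)) :=
      mul_le_mul_of_nonneg_left (by linarith) (sq_nonneg _)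
    have s2 : (u₁ - u₂) ^ 2 * (4 * (u₁ * u₂)) ≤ (u₁ - u₂) ^ 2 * (u₁ + u₂) ^ 2 :=
      mul_le_mul_of_nonneg_left h4A (sq_nonneg _)
    linarith
  have hgap_v : (v₁ - v₂) ^ 2 * (4 * (v₁ * v₂)) ≤ (a₁ - a₂) ^ 2 := by
    have h4B : 4 * (v₁ * v₂) ≤ (v₁ + v₂) ^ 2 := by nlinarith [sq_nonneg (v₁ - v₂)]
    have hid : (v₁ - v₂) ^ 2 * (v₁ + v₂) ^ 2 = (a₁ - a₂) ^ 2 := by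
      have h : (v₁ - v₂) ^ 2 * (v₁ + v₂) ^ 2 = (v₁ ^ 2 - v₂ ^ 2) ^ 2 := by ring
      rw [h, hv₁, hv₂]; ring
    have s2 : (v₁ - v₂) ^ 2 * (4 * (v₁ * v₂)) ≤ (v₁ - v₂) ^ 2 * (v₁ + v₂) ^ 2 :=
      mul_le_mul_of_nonneg_left h4B (sq_nonneg _)
    linarith
  have hE4B : (a₁ + a₂ - (u₁ * u₂ + v₁ * v₂)) * (4 * (v₁ * v₂)) ≤ (a₁ - a₂) ^ 2 := by
    calc (a₁ + a₂ - (u₁ * u₂ + v₁ * v₂)) * (4 * (v₁ * v₂))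
        = ((u₁ - u₂) ^ 2 * (4 * (v₁ * v₂)) + (v₁ - v₂) ^ 2 * (4 * (v₁ * v₂))) / 2 := by
          rw [hEdec]; ring
      _ ≤ ((a₁ - a₂) ^ 2 + (a₁ - a₂) ^ 2) / 2 := by linarith
      _ = (a₁ - a₂) ^ 2 := by ring
  have key2 : 2 * (((u₁ * u₂ + v₁ * v₂) / (a₁ + a₂))⁻¹ - 1)
      ≤ (a₁ - a₂) ^ 2 / ((a₁ - 1) * (a₂ - 1)) := by
    rw [inv_div, div_sub_one hSpos.ne',
      show (a₁ - 1) * (a₂ - 1) = (v₁ * v₂) ^ 2 by rw [mul_pow, hv₁, hv₂],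
      ← mul_div_assoc, div_le_div_iff₀ hSpos (by positivity)]
    have t1 := mul_le_mul_of_nonneg_right hE4B hBpos.le
    have t2 := mul_le_mul_of_nonneg_left
      (show 2 * (v₁ * v₂) ≤ u₁ * u₂ + v₁ * v₂ by linarith) (sq_nonneg (a₁ - a₂))
    have t3 : 0 ≤ (a₁ - a₂) ^ 2 * (u₁ * u₂ + v₁ * v₂) :=
      mul_nonneg (sq_nonneg _) hSpos.le
    linarith [t1, t2, t3]
  have c4 : r * (2 * (((u₁ * u₂ + v₁ * v₂) / (a₁ + a₂))⁻¹ - 1))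
      ≤ r * ((a₁ - a₂) ^ 2 / ((a₁ - 1) * (a₂ - 1))) :=
    mul_le_mul_of_nonneg_left key2 hr.le
  have c5 : r * (2 * (((u₁ * u₂ + v₁ * v₂) / (a₁ + a₂))⁻¹ - 1))
      = 2 * (r * (((u₁ * u₂ + v₁ * v₂) / (a₁ + a₂))⁻¹ - 1)) := by ring
  rw [mul_div_assoc]
  linarith [hb1, c4, c5]

lemma nb_D_eq (r a₁ a₂ : ℝ) (hr : 0 < r) (ha₁ : 1 < a₁) (ha₂ : 1 < a₂) :
    ((1 - (a₁ - 1) / (a₁ + 1)) * (1 - (a₂ - 1) / (a₂ + 1))) ^ (r / 2)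
      * (1 - Real.sqrt ((a₁ - 1) / (a₁ + 1) * ((a₂ - 1) / (a₂ + 1)))) ^ (-r : ℝ)
    = ((Real.sqrt ((a₁ + 1) * (a₂ + 1)) + Real.sqrt ((a₁ - 1) * (a₂ - 1)))
        / (a₁ + a₂)) ^ r := by
  set A := Real.sqrt ((a₁ + 1) * (a₂ + 1)) with hA_def
  set B := Real.sqrt ((a₁ - 1) * (a₂ - 1)) with hB_def
  have hA2 : A ^ 2 = (a₁ + 1) * (a₂ + 1) :=
    Real.sq_sqrt (mul_nonneg (by linarith) (by linarith))
  have hB2 : B ^ 2 = (a₁ - 1) * (a₂ - 1) :=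
    Real.sq_sqrt (mul_nonneg (by linarith) (by linarith))
  have hApos : 0 < A := Real.sqrt_pos.mpr (mul_pos (by linarith) (by linarith))
  have hBpos : 0 < B := Real.sqrt_pos.mpr (mul_pos (by linarith) (by linarith))
  have hBA : B < A :=
    Real.sqrt_lt_sqrt (mul_nonneg (by linarith) (by linarith)) (by nlinarith)
  have hAB : 0 < A - B := by linarith
  have e₁ : 1 - (a₁ - 1) / (a₁ + 1) = 2 / (a₁ + 1) := by
    field_simp
    ring
  have e₂ : 1 - (a₂ - 1) / (a₂ + 1) = 2 / (a₂ + 1) := by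
    field_simp
    ring
  have eD : (1 - (a₁ - 1) / (a₁ + 1)) * (1 - (a₂ - 1) / (a₂ + 1)) = (2 / A) ^ 2 := by
    rw [e₁, e₂, div_pow, hA2, div_mul_div_comm]
    norm_num
  have eDr : ((1 - (a₁ - 1) / (a₁ + 1)) * (1 - (a₂ - 1) / (a₂ + 1))) ^ (r / 2)
      = (2 / A) ^ r := by
    rw [eD, ← Real.rpow_natCast (2 / A) 2, ← Real.rpow_mul (by positivity)]
    congr 1
    push_cast
    ring
  have eE : (a₁ - 1) / (a₁ + 1) * ((a₂ - 1) / (a₂ + 1)) = (B / A) ^ 2 := by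
    rw [div_mul_div_comm, div_pow, hB2, hA2]
  have eS : Real.sqrt ((a₁ - 1) / (a₁ + 1) * ((a₂ - 1) / (a₂ + 1))) = B / A := by
    rw [eE, Real.sqrt_sq (by positivity)]
  have e1S : 1 - Real.sqrt ((a₁ - 1) / (a₁ + 1) * ((a₂ - 1) / (a₂ + 1))) = (A - B) / A := by
    rw [eS]
    field_simp
  have eneg : ((A - B) / A) ^ (-r : ℝ) = (A / (A - B)) ^ r := by
    rw [Real.rpow_neg (div_nonneg hAB.le hApos.le),
      ← Real.inv_rpow (div_nonneg hAB.le hApos.le), inv_div]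
  rw [eDr, e1S, eneg, ← Real.mul_rpow (by positivity) (div_nonneg hApos.le hAB.le)]
  congr 1
  rw [div_mul_div_comm, div_eq_div_iff (by positivity) (by linarith)]
  linear_combination (-A) * hA2 + A * hB2

/-- For `a₁, a₂ > 1` and `p_j = (a_j-1)/(a_j+1)`, the squared Hellinger distance
`∑ₖ (√q₁(k) - √q₂(k))²` between `NB(r,p₁)` and `NB(r,p₂)` is at most
`r (a₁-a₂)² / ((a₁-1)(a₂-1))`, for every `r > 0`. -/
theorem nb_hellinger_bound (r a₁ a₂ : ℝ) (hr : 0 < r) (ha₁ : 1 < a₁) (ha₂ : 1 < a₂) :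
    (∑' k : ℕ,
        (Real.sqrt (nbMass r ((a₁ - 1) / (a₁ + 1)) k)
          - Real.sqrt (nbMass r ((a₂ - 1) / (a₂ + 1)) k)) ^ 2)
      ≤ r * (a₁ - a₂) ^ 2 / ((a₁ - 1) * (a₂ - 1)) := by
  have h₁0 : (0:ℝ) ≤ (a₁ - 1) / (a₁ + 1) := div_nonneg (by linarith) (by linarith)
  have h₁1 : (a₁ - 1) / (a₁ + 1) < 1 := by
    rw [div_lt_one (by linarith)]; linarith
  have h₂0 : (0:ℝ) ≤ (a₂ - 1) / (a₂ + 1) := div_nonneg (by linarith) (by linarith)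
  have h₂1 : (a₂ - 1) / (a₂ + 1) < 1 := by
    rw [div_lt_one (by linarith)]; linarith
  have hq₁ := hasSum_nbMass (r := r) hr h₁0 h₁1
  have hq₂ := hasSum_nbMass (r := r) hr h₂0 h₂1
  have hcross := hasSum_sqrt_mul (r := r) hr h₁0 h₁1 h₂0 h₂1
  have htot : HasSum (fun k : ℕ =>
      (Real.sqrt (nbMass r ((a₁ - 1) / (a₁ + 1)) k)
        - Real.sqrt (nbMass r ((a₂ - 1) / (a₂ + 1)) k)) ^ 2)
      (1 + 1 - 2 * (((1 - (a₁ - 1) / (a₁ + 1)) * (1 - (a₂ - 1) / (a₂ + 1))) ^ (r / 2)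
        * (1 - Real.sqrt ((a₁ - 1) / (a₁ + 1) * ((a₂ - 1) / (a₂ + 1)))) ^ (-r : ℝ))) := by
    have h := (hq₁.add hq₂).sub (hcross.mul_left 2)
    convert h using 1
    · rfl
    funext k
    rw [sub_sq, Real.sq_sqrt (nbMass_nonneg hr h₁0 h₁1 k),
      Real.sq_sqrt (nbMass_nonneg hr h₂0 h₂1 k)]
    ring
  rw [htot.tsum_eq, nb_D_eq r a₁ a₂ hr ha₁ ha₂]
  have hcore := core_ineq r a₁ a₂ hr ha₁ ha₂
  linarith
end

section
/- Let m, n be positive integers with n < m < 2(n-1) and m odd. Let a have Fourier coefficients a_k with a₀² + ∑_j |j|^{2α}|a_j|² ≤ M for some α > 1/2. Let A_n(a) be the n×n Toeplitz matrix with entries a_{k-j}, and let Ã_{n,m}(a) be the upper-left n×n submatrix of the m×m circulant matrix whose representing vector is (a₀, a₋₁, ..., a_{-(m-1)/2}, a_{(m-1)/2}, ..., a₁). Then the squared Hilbert–Schmidt norm satisfies ‖A_n(a) − Ã_{n,m}(a)‖₂² = 2∑_{k=(m+1)/2}^{n-1} (n-k)|a_k − ā_{m-k}|² ≤ 4(m−n+1)^{1−2α}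 M. -/
open Finset

private lemma sum_range_int (n : ℕ) (f : ℤ → ℝ) :
    ∑ d ∈ Finset.range n, f (d : ℤ) = ∑ d ∈ Finset.Icc (0:ℤ) ((n:ℤ) - 1), f d := by
  refine Finset.sum_nbij' (fun d => (d : ℤ)) (fun d => d.toNat) ?_ ?_ ?_ ?_ ?_ <;>
    intros a ha <;> simp [Finset.mem_range, Finset.mem_Icc] at * <;> omega

private lemma sum_sq_toeplitz (g : ℤ → ℝ) (hsymm : ∀ d : ℤ, g (-d) = g d) (h0 : g 0 = 0) :
    ∀ n : ℕ, ∑ i ∈ Finset.range n, ∑ j ∈ Finset.range n, g ((j : ℤ) - (i : ℤ))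
      = 2 * ∑ d ∈ Finset.range n, ((n : ℝ) - (d : ℝ)) * g (d : ℤ) := by
  intro n
  induction n with
  | zero => simp
  | succ n ih =>
    have hkey : ∑ i ∈ Finset.range n, g ((n : ℤ) - (i : ℤ))
        = ∑ d ∈ Finset.range n, g ((d : ℤ) + 1) := by
      rw [← Finset.sum_range_reflect (fun d => g ((d : ℤ) + 1)) n]
      refine Finset.sum_congr rfl fun i hi => ?_
      have hi' : i < n := Finset.mem_range.mp hi
      congr 1
      omega
    have hrow : ∑ j ∈ Finset.range n, g ((j : ℤ) - (n : ℤ))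
        = ∑ j ∈ Finset.range n, g ((n : ℤ) - (j : ℤ)) := by
      refine Finset.sum_congr rfl fun j _ => ?_
      rw [show (j : ℤ) - (n : ℤ) = -((n:ℤ) - (j:ℤ)) by ring, hsymm]
    have hL : ∑ i ∈ Finset.range (n+1), ∑ j ∈ Finset.range (n+1), g ((j : ℤ) - (i : ℤ))
        = (∑ i ∈ Finset.range n, ∑ j ∈ Finset.range n, g ((j : ℤ) - (i : ℤ)))
          + 2 * ∑ d ∈ Finset.range n, g ((d : ℤ) + 1) := by
      rw [Finset.sum_range_succ]
      simp only [Finset.sum_range_succ]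
      rw [Finset.sum_add_distrib, hrow, hkey]
      rw [show ((n:ℤ) - (n:ℤ)) = 0 by ring, h0]
      ring
    have hR : ∑ d ∈ Finset.range (n+1), (((n:ℝ) + 1) - (d : ℝ)) * g (d : ℤ)
        = (∑ d ∈ Finset.range n, ((n : ℝ) - (d : ℝ)) * g (d : ℤ))
          + ∑ d ∈ Finset.range n, g ((d : ℤ) + 1) := by
      have e1 : ∀ d : ℕ, (((n:ℝ) + 1) - (d : ℝ)) * g (d : ℤ)
          = ((n : ℝ) - (d : ℝ)) * g (d : ℤ) + g (d:ℤ) := by intro d; ring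
      rw [Finset.sum_congr rfl (fun d _ => e1 d), Finset.sum_add_distrib]
      congr 1
      · rw [Finset.sum_range_succ]
        simp
      · rw [Finset.sum_range_succ' (fun d : ℕ => g (d : ℤ)) n]
        push_cast
        rw [h0]
        ring
    rw [hL, ih]
    push_cast
    rw [hR]
    ring


set_option maxHeartbeats 1000000 in
/-- Hilbert–Schmidt approximation of a Toeplitz symbol matrix by the upper-left
`n×n` corner of an `m×m` circulant (odd `m`, `n < m < 2(n-1)`): with Fourier
coefficients `c_k` satisfying `c_{-k} = conj c_k` and the Sobolev bound
`|c₀|² + ∑_j |j|^{2α}|c_j|² ≤ M` for some `α > 1/2`, one has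
`‖A_n − Ã_{n,m}‖₂² = 2 ∑_{k=(m+1)/2}^{n-1} (n-k)|c_k − conj c_{m-k}|²
 ≤ 4 (m-n+1)^{1-2α} M`. -/
theorem toeplitz_circulant_hs_bound (α M : ℝ) (hα : 1 / 2 < α) (hM : 1 < M)
    (n m : ℕ) (hnm : n < m) (hm2 : m < 2 * (n - 1)) (hodd : Odd m)
    (c : ℤ → ℂ) (hconj : ∀ k : ℤ, c (-k) = (starRingEnd ℂ) (c k))
    (hsum : Summable fun j : ℤ => (j.natAbs : ℝ) ^ (2 * α) * ‖c j‖ ^ 2)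
    (hM' : ‖c 0‖ ^ 2 + (∑' j : ℤ, (j.natAbs : ℝ) ^ (2 * α) * ‖c j‖ ^ 2) ≤ M) :
    let A : Matrix (Fin n) (Fin n) ℂ := fun i j => c ((j : ℤ) - (i : ℤ))
    let B : Matrix (Fin n) (Fin n) ℂ := fun i j =>
      if ((j : ℤ) - (i : ℤ)).natAbs ≤ (m - 1) / 2 then c ((j : ℤ) - (i : ℤ))
      else if (i : ℤ) < (j : ℤ) then c ((j : ℤ) - (i : ℤ) - m)
      else c ((j : ℤ) - (i : ℤ) + m)
    (∑ i : Fin n, ∑ j : Fin n, ‖A i j - B i j‖ ^ 2)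
        = 2 * ∑ k ∈ Finset.Icc (((m : ℤ) + 1) / 2) ((n : ℤ) - 1),
            ((n : ℝ) - (k : ℝ)) * ‖c k - (starRingEnd ℂ) (c ((m : ℤ) - k))‖ ^ 2 ∧
    (∑ i : Fin n, ∑ j : Fin n, ‖A i j - B i j‖ ^ 2)
        ≤ 4 * ((m : ℝ) - (n : ℝ) + 1) ^ (1 - 2 * α) * M := by
  intro A B
  obtain ⟨t, ht⟩ := hodd
  -- basic integer facts
  have hn4 : 4 ≤ n := by omega
  -- the difference depends only on j - i
  set g : ℤ → ℝ := fun d =>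
    ‖c d - (if d.natAbs ≤ (m - 1) / 2 then c d
      else if 0 < d then c (d - (m:ℤ)) else c (d + (m:ℤ)))‖ ^ 2 with hg
  have hconjnorm : ∀ x y : ℂ, ‖(starRingEnd ℂ) x - (starRingEnd ℂ) y‖ = ‖x - y‖ := by
    intro x y
    rw [← map_sub, RCLike.norm_conj]
  have hgsymm : ∀ d : ℤ, g (-d) = g d := by
    intro d
    by_cases h : d.natAbs ≤ (m - 1) / 2
    · have h' : (-d).natAbs ≤ (m - 1) / 2 := by rwa [Int.natAbs_neg]
      simp [hg, h, h']
    · have h' : ¬ (-d).natAbs ≤ (m - 1) / 2 := by rwa [Int.natAbs_neg]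
      have hd0 : d ≠ 0 := by intro h0; subst h0; simp at h
      rcases lt_or_gt_of_ne hd0 with hd | hd
      · -- d < 0, -d > 0
        have h1 : (0:ℤ) < -d := by omega
        have h2 : ¬ (0:ℤ) < d := by omega
        have e1 : g (-d) = ‖c (-d) - c (-d - (m:ℤ))‖ ^ 2 := by
          simp only [hg]
          rw [if_neg h', if_pos h1]
        have e2 : g d = ‖c d - c (d + (m:ℤ))‖ ^ 2 := by
          simp only [hg]
          rw [if_neg h, if_neg h2]
        rw [e1, e2, hconj d, show -d - (m:ℤ) = -(d + m) by ring, hconj (d + m), hconjnorm]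
      · have h1 : ¬ (0:ℤ) < -d := by omega
        have h2 : (0:ℤ) < d := by omega
        have e1 : g (-d) = ‖c (-d) - c (-d + (m:ℤ))‖ ^ 2 := by
          simp only [hg]
          rw [if_neg h', if_neg h1]
        have e2 : g d = ‖c d - c (d - (m:ℤ))‖ ^ 2 := by
          simp only [hg]
          rw [if_neg h, if_pos h2]
        rw [e1, e2, hconj d, show -d + (m:ℤ) = -(d - m) by ring, hconj (d - m), hconjnorm]
  have hg0 : g 0 = 0 := by simp [hg]
  -- rewrite the double sum
  have hAB : ∀ i j : Fin n, ‖A i j - B i j‖ ^ 2 = g ((j : ℤ) - (i : ℤ)) := by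
    intro i j
    have : ((i : ℤ) < (j : ℤ)) = ((0:ℤ) < (j:ℤ) - (i:ℤ)) := by
      simp [sub_pos]
    simp only [hg, A, B, this]
  have hsum1 : (∑ i : Fin n, ∑ j : Fin n, ‖A i j - B i j‖ ^ 2)
      = ∑ i ∈ Finset.range n, ∑ j ∈ Finset.range n, g ((j : ℤ) - (i : ℤ)) := by
    rw [← Fin.sum_univ_eq_sum_range (fun i => ∑ j ∈ Finset.range n, g ((j : ℤ) - (i : ℤ))) n]
    refine Finset.sum_congr rfl fun i _ => ?_
    rw [← Fin.sum_univ_eq_sum_range (fun j => g ((j : ℤ) - (i : ℤ))) n]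
    exact Finset.sum_congr rfl fun j _ => hAB i j
  -- identity part
  have hIcc : ∑ d ∈ Finset.range n, ((n : ℝ) - (d : ℝ)) * g (d : ℤ)
      = ∑ k ∈ Finset.Icc (((m : ℤ) + 1) / 2) ((n : ℤ) - 1),
          ((n : ℝ) - (k : ℝ)) * ‖c k - (starRingEnd ℂ) (c ((m : ℤ) - k))‖ ^ 2 := by
    rw [show (∑ d ∈ Finset.range n, ((n : ℝ) - (d : ℝ)) * g (d : ℤ))
        = ∑ d ∈ Finset.range n, (fun d : ℤ => ((n : ℝ) - (d : ℝ)) * g d) (d : ℤ) by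
      refine Finset.sum_congr rfl fun d _ => ?_; push_cast; ring_nf]
    rw [sum_range_int n (fun d : ℤ => ((n : ℝ) - (d : ℝ)) * g d)]
    rw [← Finset.sum_subset (Finset.Icc_subset_Icc_left (by omega :
        (0:ℤ) ≤ ((m : ℤ) + 1) / 2))]
    · refine Finset.sum_congr rfl fun k hk => ?_
      rw [Finset.mem_Icc] at hk
      have hk1 : ¬ k.natAbs ≤ (m - 1) / 2 := by omega
      have hk2 : (0:ℤ) < k := by omega
      have hck : c (k - (m:ℤ)) = (starRingEnd ℂ) (c ((m:ℤ) - k)) := by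
        rw [show k - (m:ℤ) = -((m:ℤ) - k) by ring, hconj]
      simp only [hg, if_neg hk1, if_pos hk2, hck]
    · intro x hx hx'
      rw [Finset.mem_Icc] at hx
      rw [Finset.mem_Icc] at hx'
      have : x.natAbs ≤ (m - 1) / 2 := by omega
      simp [hg, this]
  have hmain : (∑ i : Fin n, ∑ j : Fin n, ‖A i j - B i j‖ ^ 2)
      = 2 * ∑ k ∈ Finset.Icc (((m : ℤ) + 1) / 2) ((n : ℤ) - 1),
          ((n : ℝ) - (k : ℝ)) * ‖c k - (starRingEnd ℂ) (c ((m : ℤ) - k))‖ ^ 2 := by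
    rw [hsum1, sum_sq_toeplitz g hgsymm hg0 n, hIcc]
  refine ⟨hmain, ?_⟩
  -- the bound
  set P : ℝ := ((m : ℝ) - (n : ℝ) + 1) ^ (1 - 2 * α) with hPdef
  have hbase : (0:ℝ) < (m : ℝ) - (n : ℝ) + 1 := by
    have : (n:ℝ) + 1 ≤ (m:ℝ) := by exact_mod_cast hnm
    linarith
  have hP : 0 < P := Real.rpow_pos_of_pos hbase _
  set F : ℤ → ℝ := fun j => (j.natAbs : ℝ) ^ (2 * α) * ‖c j‖ ^ 2 with hF
  have hFnonneg : ∀ j : ℤ, 0 ≤ F j := fun j =>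
    mul_nonneg (Real.rpow_nonneg (Nat.cast_nonneg _) _) (sq_nonneg _)
  set I : Finset ℤ := Finset.Icc (((m : ℤ) + 1) / 2) ((n : ℤ) - 1) with hI
  -- pointwise bound
  have hpt : ∀ k ∈ I, ((n : ℝ) - (k : ℝ)) * ‖c k - (starRingEnd ℂ) (c ((m : ℤ) - k))‖ ^ 2
      ≤ 2 * P * (F k + F ((m:ℤ) - k)) := by
    intro k hk
    rw [hI, Finset.mem_Icc] at hk
    have hk1 : (m:ℤ) + 1 ≤ 2 * k := by omega
    have hkpos : (0:ℤ) < k := by omega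
    have hmk : (0:ℤ) < (m:ℤ) - k := by omega
    have hkr : (0:ℝ) ≤ (k : ℝ) := by exact_mod_cast hkpos.le
    have hmkr : (0:ℝ) ≤ (m:ℝ) - (k:ℝ) := by
      have : ((m:ℤ) - k : ℤ) = (m:ℤ) - k := rfl
      have h' : (0:ℝ) ≤ (((m:ℤ) - k : ℤ) : ℝ) := by exact_mod_cast hmk.le
      push_cast at h'
      linarith
    have hcast1 : ((k.natAbs : ℕ) : ℝ) = (k : ℝ) := by
      rw [Nat.cast_natAbs, abs_of_nonneg hkpos.le]
    have hcast2 : ((((m:ℤ) - k).natAbs : ℕ) : ℝ) = (m : ℝ) - (k : ℝ) := by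
      rw [Nat.cast_natAbs, abs_of_nonneg hmk.le]
      push_cast
      ring
    -- real versions of integer facts
    have hA1 : (m:ℝ) - (n:ℝ) + 1 ≤ (k : ℝ) := by
      have : (m:ℤ) - (n:ℤ) + 1 ≤ k := by omega
      exact_mod_cast this
    have hA2 : (m:ℝ) - (n:ℝ) + 1 ≤ (m:ℝ) - (k : ℝ) := by
      have h' : (m:ℤ) - (n:ℤ) + 1 ≤ (m:ℤ) - k := by omega
      have h'' : (((m:ℤ) - (n:ℤ) + 1 : ℤ) : ℝ) ≤ (((m:ℤ) - k : ℤ) : ℝ) := by exact_mod_cast h'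
      push_cast at h''
      linarith
    have hnk1 : (n:ℝ) - (k:ℝ) ≤ (k:ℝ) := by
      have h' : (n:ℤ) - k ≤ k := by omega
      have h'' : (((n:ℤ) - k : ℤ) : ℝ) ≤ ((k : ℤ) : ℝ) := by exact_mod_cast h'
      push_cast at h''
      linarith
    have hnk2 : (n:ℝ) - (k:ℝ) ≤ (m:ℝ) - (k:ℝ) := by
      have : (n:ℝ) ≤ (m:ℝ) := by exact_mod_cast hnm.le
      linarith
    have hnk0 : 0 ≤ (n:ℝ) - (k:ℝ) := by
      have h' : (0:ℤ) ≤ (n:ℤ) - k := by omega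
      have h'' : ((0:ℤ) : ℝ) ≤ (((n:ℤ) - k : ℤ) : ℝ) := by exact_mod_cast h'
      push_cast at h''
      linarith
    have hkpos' : (0:ℝ) < (k:ℝ) := by exact_mod_cast hkpos
    have hmkpos' : (0:ℝ) < (m:ℝ) - (k:ℝ) := by linarith
    -- rpow bounds
    have hsplit : ∀ x : ℝ, 0 < x → x = x ^ (2*α) * x ^ (1 - 2*α) := by
      intro x hx
      rw [← Real.rpow_add hx, show 2*α + (1 - 2*α) = 1 by ring, Real.rpow_one]
    have hexp : (1 - 2*α) ≤ 0 := by linarith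
    have hb1 : ((k:ℝ)) ^ (1 - 2*α) ≤ P :=
      Real.rpow_le_rpow_of_nonpos hbase hA1 hexp
    have hb2 : ((m:ℝ) - (k:ℝ)) ^ (1 - 2*α) ≤ P :=
      Real.rpow_le_rpow_of_nonpos hbase hA2 hexp
    have hpow1 : (0:ℝ) ≤ (k:ℝ) ^ (2*α) := Real.rpow_nonneg hkpos'.le _
    have hpow2 : (0:ℝ) ≤ ((m:ℝ) - (k:ℝ)) ^ (2*α) := Real.rpow_nonneg hmkpos'.le _
    have hc1 : (n:ℝ) - (k:ℝ) ≤ P * (k:ℝ) ^ (2*α) := by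
      calc (n:ℝ) - (k:ℝ) ≤ (k:ℝ) := hnk1
        _ = (k:ℝ) ^ (2*α) * (k:ℝ) ^ (1 - 2*α) := hsplit _ hkpos'
        _ ≤ (k:ℝ) ^ (2*α) * P := by
            exact mul_le_mul_of_nonneg_left hb1 hpow1
        _ = P * (k:ℝ) ^ (2*α) := by ring
    have hc2 : (n:ℝ) - (k:ℝ) ≤ P * ((m:ℝ) - (k:ℝ)) ^ (2*α) := by
      calc (n:ℝ) - (k:ℝ) ≤ (m:ℝ) - (k:ℝ) := hnk2
        _ = ((m:ℝ) - (k:ℝ)) ^ (2*α) * ((m:ℝ) - (k:ℝ)) ^ (1 - 2*α) := hsplit _ hmkpos'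
        _ ≤ ((m:ℝ) - (k:ℝ)) ^ (2*α) * P := mul_le_mul_of_nonneg_left hb2 hpow2
        _ = P * ((m:ℝ) - (k:ℝ)) ^ (2*α) := by ring
    -- norm bound
    have hnormle : ‖c k - (starRingEnd ℂ) (c ((m:ℤ) - k))‖ ^ 2
        ≤ 2 * ‖c k‖ ^ 2 + 2 * ‖c ((m:ℤ) - k)‖ ^ 2 := by
      have h1 := norm_sub_le (c k) ((starRingEnd ℂ) (c ((m:ℤ) - k)))
      rw [RCLike.norm_conj] at h1
      have h2 : (0:ℝ) ≤ ‖c k‖ := norm_nonneg _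
      have h3 : (0:ℝ) ≤ ‖c ((m:ℤ) - k)‖ := norm_nonneg _
      have h4 : (0:ℝ) ≤ ‖c k - (starRingEnd ℂ) (c ((m:ℤ) - k))‖ := norm_nonneg _
      have h5 : ‖c k - (starRingEnd ℂ) (c ((m:ℤ) - k))‖ ^ 2
          ≤ (‖c k‖ + ‖c ((m:ℤ) - k)‖) ^ 2 := by exact pow_le_pow_left₀ h4 h1 2
      nlinarith [h5, sq_nonneg (‖c k‖ - ‖c ((m:ℤ) - k)‖)]
    have ha : (0:ℝ) ≤ ‖c k‖ ^ 2 := sq_nonneg _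
    have hb : (0:ℝ) ≤ ‖c ((m:ℤ) - k)‖ ^ 2 := sq_nonneg _
    simp only [hF, hcast1, hcast2]
    nlinarith [mul_le_mul_of_nonneg_left hnormle hnk0,
      mul_le_mul_of_nonneg_right hc1 ha, mul_le_mul_of_nonneg_right hc2 hb]
  -- sum the bound
  have hstep1 : ∑ k ∈ I, ((n : ℝ) - (k : ℝ)) * ‖c k - (starRingEnd ℂ) (c ((m : ℤ) - k))‖ ^ 2
      ≤ ∑ k ∈ I, 2 * P * (F k + F ((m:ℤ) - k)) := Finset.sum_le_sum hpt
  set I' : Finset ℤ := Finset.Icc ((m:ℤ) - ((n:ℤ) - 1)) ((m:ℤ) - ((m:ℤ)+1)/2) with hI'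
  have hrefl : ∑ k ∈ I, F ((m:ℤ) - k) = ∑ k ∈ I', F k := by
    refine Finset.sum_nbij' (fun k => (m:ℤ) - k) (fun k => (m:ℤ) - k) ?_ ?_ ?_ ?_ ?_ <;>
      intros a ha <;> simp [hI, hI', Finset.mem_Icc] at * <;> omega
  have hdisj : Disjoint I I' := by
    rw [Finset.disjoint_left]
    intro x hx hx'
    rw [hI, Finset.mem_Icc] at hx
    rw [hI', Finset.mem_Icc] at hx'
    omega
  have hunion : ∑ k ∈ I, F k + ∑ k ∈ I', F k = ∑ k ∈ I ∪ I', F k :=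
    (Finset.sum_union hdisj).symm
  have htsum : ∑ k ∈ I ∪ I', F k ≤ M := by
    have h1 : ∑ k ∈ I ∪ I', F k ≤ ∑' j : ℤ, F j :=
      Summable.sum_le_tsum _ (fun i _ => hFnonneg i) hsum
    have h2 : (0:ℝ) ≤ ‖c 0‖ ^ 2 := sq_nonneg _
    have : (∑' j : ℤ, F j) ≤ M := by
      rw [hF]; linarith [hM']
    linarith
  have hsum2 : ∑ k ∈ I, 2 * P * (F k + F ((m:ℤ) - k)) ≤ 2 * P * M := by
    rw [← Finset.mul_sum, Finset.sum_add_distrib, hrefl, hunion]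
    have := mul_le_mul_of_nonneg_left htsum (by positivity : (0:ℝ) ≤ 2 * P)
    linarith
  rw [hmain]
  calc 2 * ∑ k ∈ I, ((n : ℝ) - (k : ℝ)) * ‖c k - (starRingEnd ℂ) (c ((m : ℤ) - k))‖ ^ 2
      ≤ 2 * (2 * P * M) := by linarith [le_trans hstep1 hsum2]
    _ = 4 * P * M := by ring
end

section
/- Let λ ∈ (1/2,1) and Q₁, Q₂ be positive definite Hermitian matrices with ((1−λ)/λ)I < Q_i < (λ/(1−λ))I. Set R_i = Q_i(Q_i+I)^{-1} and A_i = 2Q_i + I. Then ‖R₁ − R₂‖₂ ≤ (1−λ)^{-1}‖A₁ − A₂‖₂ in Hilbert–Schmidt norm. -/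
open scoped Matrix
open scoped ComplexOrder InnerProductSpace

/-- Hilbert–Schmidt (Frobenius) norm of a complex matrix. -/
noncomputable def frobNorm {n : ℕ} (A : Matrix (Fin n) (Fin n) ℂ) : ℝ :=
  Real.sqrt (∑ i, ∑ j, ‖A i j‖ ^ 2)


noncomputable def Efn {n : ℕ} (y : Fin n → ℂ) : EuclideanSpace ℂ (Fin n) :=
  (WithLp.equiv 2 (Fin n → ℂ)).symm y

lemma Efn_norm_sq {n : ℕ} (y : Fin n → ℂ) : ‖Efn y‖ ^ 2 = ∑ i, ‖y i‖ ^ 2 := by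
  rw [EuclideanSpace.norm_eq, Real.sq_sqrt (by positivity)]
  rfl

lemma expand_key {n : ℕ} {Q : Matrix (Fin n) (Fin n) ℂ} (hQ : Q.PosDef)
    (y : Fin n → ℂ) : ‖Efn y‖ ≤ ‖Efn ((Q + 1).mulVec y)‖ := by
  set x := (Q + 1).mulVec y with hx
  have hinner : ⟪Efn y, Efn x⟫_ℂ = dotProduct (star y) x := by
    simp only [Efn, PiLp.inner_apply, RCLike.inner_apply, dotProduct]
    refine Finset.sum_congr rfl fun i _ => ?_
    rw [mul_comm]; rfl
  have hsplit : dotProduct (star y) x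
      = dotProduct (star y) (Q.mulVec y) + dotProduct (star y) y := by
    rw [hx, Matrix.add_mulVec, Matrix.one_mulVec, dotProduct_add]
  have hpos : 0 ≤ (dotProduct (star y) (Q.mulVec y)).re := by
    have := hQ.posSemidef.dotProduct_mulVec_nonneg y
    exact (Complex.le_def.mp this).1
  have hyy : (dotProduct (star y) y).re = ‖Efn y‖ ^ 2 := by
    rw [Efn_norm_sq]
    have : dotProduct (star y) y = ((∑ i, ‖y i‖ ^ 2 : ℝ) : ℂ) := by
      simp only [dotProduct, Pi.star_apply]
      push_cast
      refine Finset.sum_congr rfl fun i _ => ?_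
      rw [mul_comm, Complex.star_def, Complex.mul_conj, Complex.normSq_eq_norm_sq]
      push_cast
      rfl
    rw [this, Complex.ofReal_re]
  have h1 : ‖Efn y‖ ^ 2 ≤ (⟪Efn y, Efn x⟫_ℂ).re := by
    rw [hinner, hsplit, Complex.add_re, hyy]
    linarith
  have h2 : (⟪Efn y, Efn x⟫_ℂ).re ≤ ‖Efn y‖ * ‖Efn x‖ := by
    calc (⟪Efn y, Efn x⟫_ℂ).re ≤ ‖⟪Efn y, Efn x⟫_ℂ‖ := Complex.re_le_norm _
      _ ≤ ‖Efn y‖ * ‖Efn x‖ := norm_inner_le_norm _ _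
  rcases eq_or_lt_of_le (norm_nonneg (Efn y)) with h0 | h0
  · rw [← h0]; exact norm_nonneg _
  · have : ‖Efn y‖ * ‖Efn y‖ ≤ ‖Efn y‖ * ‖Efn x‖ := by nlinarith
    exact le_of_mul_le_mul_left this h0

lemma contract_sum {n : ℕ} {Q : Matrix (Fin n) (Fin n) ℂ} (hQ : Q.PosDef)
    (x : Fin n → ℂ) :
    ∑ i, ‖((Q + 1)⁻¹.mulVec x) i‖ ^ 2 ≤ ∑ i, ‖x i‖ ^ 2 := by
  have hP : (Q + 1).PosDef := hQ.add_posSemidef Matrix.PosSemidef.one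
  have hdet : IsUnit (Q + 1).det := isUnit_iff_ne_zero.mpr hP.det_pos.ne'
  set y := (Q + 1)⁻¹.mulVec x with hy
  have hxy : (Q + 1).mulVec y = x := by
    rw [hy, Matrix.mulVec_mulVec, Matrix.mul_nonsing_inv _ hdet, Matrix.one_mulVec]
  have := expand_key hQ y
  rw [hxy] at this
  have h2 := pow_le_pow_left₀ (norm_nonneg _) this 2
  rwa [Efn_norm_sq, Efn_norm_sq] at h2

lemma frob_left {n : ℕ} {Q : Matrix (Fin n) (Fin n) ℂ} (hQ : Q.PosDef)
    (C : Matrix (Fin n) (Fin n) ℂ) : frobNorm ((Q + 1)⁻¹ * C) ≤ frobNorm C := by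
  unfold frobNorm
  apply Real.sqrt_le_sqrt
  rw [Finset.sum_comm]
  rw [Finset.sum_comm (s := Finset.univ) (t := Finset.univ) (f := fun i j => ‖C i j‖ ^ 2)]
  apply Finset.sum_le_sum
  intro j _
  have := contract_sum hQ (fun k => C k j)
  convert this using 2 with i
  · rfl
  · rfl

lemma frob_right {n : ℕ} {Q : Matrix (Fin n) (Fin n) ℂ} (hQ : Q.PosDef)
    (C : Matrix (Fin n) (Fin n) ℂ) : frobNorm (C * (Q + 1)⁻¹) ≤ frobNorm C := by
  have hQt : Qᵀ.PosDef := hQ.transpose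
  unfold frobNorm
  apply Real.sqrt_le_sqrt
  apply Finset.sum_le_sum
  intro i _
  have := contract_sum hQt (fun k => C i k)
  convert this using 2 with j
  · rfl
  rw [Matrix.mul_apply]
  have : (Qᵀ + 1)⁻¹ = ((Q + 1)⁻¹)ᵀ := by
    rw [Matrix.transpose_nonsing_inv, Matrix.transpose_add, Matrix.transpose_one]
  rw [this]
  simp [Matrix.mulVec, dotProduct, Matrix.transpose_apply, mul_comm]

lemma frob_nonneg {n : ℕ} (A : Matrix (Fin n) (Fin n) ℂ) : 0 ≤ frobNorm A :=
  Real.sqrt_nonneg _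

lemma frob_two_smul {n : ℕ} (D : Matrix (Fin n) (Fin n) ℂ) :
    frobNorm ((2 : ℂ) • D) = 2 * frobNorm D := by
  unfold frobNorm
  have h : ∀ i j, ‖((2 : ℂ) • D) i j‖ ^ 2 = 4 * ‖D i j‖ ^ 2 := by
    intro i j
    rw [Matrix.smul_apply, norm_smul]
    have : ‖(2 : ℂ)‖ = 2 := by simp
    rw [this]; ring
  simp_rw [h, ← Finset.mul_sum]
  rw [Real.sqrt_mul (by norm_num), show Real.sqrt 4 = 2 by
    rw [show (4:ℝ) = 2 ^ 2 by norm_num, Real.sqrt_sq (by norm_num)]]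

/-- For positive definite Hermitian `Q₁, Q₂` with `((1-λ)/λ) I < Qᵢ < (λ/(1-λ)) I`
(`λ ∈ (1/2,1)`), setting `Rᵢ = Qᵢ(Qᵢ+I)⁻¹` and `Aᵢ = 2Qᵢ + I`, one has
`‖R₁ − R₂‖₂ ≤ (1-λ)⁻¹ ‖A₁ − A₂‖₂` in Hilbert–Schmidt norm. -/
theorem R_difference_hs_bound (n : ℕ) (lam : ℝ)
    (hlam1 : 1 / 2 < lam) (hlam2 : lam < 1)
    (Q₁ Q₂ : Matrix (Fin n) (Fin n) ℂ)
    (hQ₁ : Q₁.IsHermitian) (hQ₂ : Q₂.IsHermitian)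
    (hQ₁pos : Q₁.PosDef) (hQ₂pos : Q₂.PosDef)
    (hlow₁ : (Q₁ - (((1 - lam) / lam : ℝ) : ℂ) • (1 : Matrix (Fin n) (Fin n) ℂ)).PosDef)
    (hup₁ : (((lam / (1 - lam) : ℝ) : ℂ) • (1 : Matrix (Fin n) (Fin n) ℂ) - Q₁).PosDef)
    (hlow₂ : (Q₂ - (((1 - lam) / lam : ℝ) : ℂ) • (1 : Matrix (Fin n) (Fin n) ℂ)).PosDef)
    (hup₂ : (((lam / (1 - lam) : ℝ) : ℂ) • (1 : Matrix (Fin n) (Fin n) ℂ) - Q₂).PosDef) :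
    let R₁ := Q₁ * (Q₁ + 1)⁻¹
    let R₂ := Q₂ * (Q₂ + 1)⁻¹
    let A₁ := (2 : ℂ) • Q₁ + 1
    let A₂ := (2 : ℂ) • Q₂ + 1
    frobNorm (R₁ - R₂) ≤ (1 - lam)⁻¹ * frobNorm (A₁ - A₂) := by
  intro R₁ R₂ A₁ A₂
  have hd₁ : IsUnit (Q₁ + 1).det :=
    isUnit_iff_ne_zero.mpr (hQ₁pos.add_posSemidef Matrix.PosSemidef.one).det_pos.ne'
  have hd₂ : IsUnit (Q₂ + 1).det :=
    isUnit_iff_ne_zero.mpr (hQ₂pos.add_posSemidef Matrix.PosSemidef.one).det_pos.ne'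
  have e1 : R₁ = 1 - (Q₁ + 1)⁻¹ := by
    show Q₁ * (Q₁ + 1)⁻¹ = _
    have : Q₁ * (Q₁ + 1)⁻¹ = ((Q₁ + 1) - 1) * (Q₁ + 1)⁻¹ := by rw [add_sub_cancel_right]
    rw [this, Matrix.sub_mul, Matrix.mul_nonsing_inv _ hd₁, Matrix.one_mul]
  have e2 : R₂ = 1 - (Q₂ + 1)⁻¹ := by
    show Q₂ * (Q₂ + 1)⁻¹ = _
    have : Q₂ * (Q₂ + 1)⁻¹ = ((Q₂ + 1) - 1) * (Q₂ + 1)⁻¹ := by rw [add_sub_cancel_right]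
    rw [this, Matrix.sub_mul, Matrix.mul_nonsing_inv _ hd₂, Matrix.one_mul]
  have hident : R₁ - R₂ = (Q₂ + 1)⁻¹ * ((Q₁ - Q₂) * (Q₁ + 1)⁻¹) := by
    rw [e1, e2]
    have hq : Q₁ - Q₂ = (Q₁ + 1) - (Q₂ + 1) := by abel
    calc (1 - (Q₁ + 1)⁻¹) - (1 - (Q₂ + 1)⁻¹) = (Q₂ + 1)⁻¹ - (Q₁ + 1)⁻¹ := by abel
      _ = (Q₂ + 1)⁻¹ * ((Q₁ + 1) * (Q₁ + 1)⁻¹) - (Q₂ + 1)⁻¹ * ((Q₂ + 1) * (Q₁ + 1)⁻¹) := by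
          rw [Matrix.mul_nonsing_inv _ hd₁, mul_one, ← Matrix.mul_assoc,
            Matrix.nonsing_inv_mul _ hd₂, Matrix.one_mul]
      _ = (Q₂ + 1)⁻¹ * ((Q₁ - Q₂) * (Q₁ + 1)⁻¹) := by
          rw [hq, Matrix.sub_mul, Matrix.mul_sub]
  have hA : A₁ - A₂ = (2 : ℂ) • (Q₁ - Q₂) := by
    show ((2 : ℂ) • Q₁ + 1) - ((2 : ℂ) • Q₂ + 1) = _
    rw [smul_sub]; abel
  have hchain : frobNorm (R₁ - R₂) ≤ frobNorm (Q₁ - Q₂) := by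
    rw [hident]
    calc frobNorm ((Q₂ + 1)⁻¹ * ((Q₁ - Q₂) * (Q₁ + 1)⁻¹))
        ≤ frobNorm ((Q₁ - Q₂) * (Q₁ + 1)⁻¹) := frob_left hQ₂pos _
      _ ≤ frobNorm (Q₁ - Q₂) := frob_right hQ₁pos _
  have hAval : frobNorm (A₁ - A₂) = 2 * frobNorm (Q₁ - Q₂) := by
    rw [hA, frob_two_smul]
  rw [hAval]
  have hF := frob_nonneg (Q₁ - Q₂)
  have hl : (2 : ℝ) ≤ (1 - lam)⁻¹ := by
    rw [le_inv_comm₀ (by norm_num) (by linarith)]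
    linarith
  nlinarith
end
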